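/- arXiv:2103.06328 — 4 statements merged into one kernel-verified Lean document; each statement's English description precedes it below -/
import Mathlib

section
/- If (X, D(0), D(1)) is independent of Z, P(Z=0) > 0, and monotonicity holds (D(1) ≥ D(0) a.s.), then E[X | D = 1, Z = 0] = E[X | D(0) = D(1) = 1], provided P(D(0)=D(1)=1) > 0 and X is integrable. -/
open MeasureTheory ProbabilityTheory

/-- If (X, D(0), D(1)) is independent of Z, P(Z=0) > 0, and monotonicity holds (D(1) ≥ D(0) a.s.),
then E[X | D = 1, Z = 0] = E[X | D(0) = D(1) = 1], provided P(D(0)=D(1)=1) > 0 and X is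
integrable. The observed treatment is `D ω = Z ω * D1 ω + (1 - Z ω) * D0 ω`. -/
theorem profiling_observable_always_takers
    {Ω : Type*} [MeasurableSpace Ω] (μ : Measure Ω) [IsProbabilityMeasure μ]
    (Z D0 D1 X : Ω → ℝ)
    (hZ : Measurable Z) (hD0 : Measurable D0) (hD1 : Measurable D1) (hX : Measurable X)
    (hZbin : ∀ ω, Z ω = 0 ∨ Z ω = 1)
    (hD0bin : ∀ ω, D0 ω = 0 ∨ D0 ω = 1) (hD1bin : ∀ ω, D1 ω = 0 ∨ D1 ω = 1)
    (hindep : IndepFun (fun ω => (X ω, D0 ω, D1 ω)) Z μ)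
    (hZ0pos : 0 < μ {ω | Z ω = 0})
    (hmono : ∀ᵐ ω ∂μ, D0 ω ≤ D1 ω)
    (hATpos : 0 < μ {ω | D0 ω = 1 ∧ D1 ω = 1})
    (hXint : Integrable X μ)
    (D : Ω → ℝ) (hD : ∀ ω, D ω = Z ω * D1 ω + (1 - Z ω) * D0 ω) :
    ∫ ω, X ω ∂(μ[|{ω | D ω = 1 ∧ Z ω = 0}]) =
      ∫ ω, X ω ∂(μ[|{ω | D0 ω = 1 ∧ D1 ω = 1}]) := by
  classical
  set A := {ω | D0 ω = 1 ∧ D1 ω = 1} with hAdef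
  set B := {ω | Z ω = 0} with hBdef
  have hAmeas : MeasurableSet A :=
    (hD0 (measurableSet_singleton 1)).inter (hD1 (measurableSet_singleton 1))
  have hBmeas : MeasurableSet B := hZ (measurableSet_singleton 0)
  -- a.e. set equality of conditioning events
  have hSeq : ({ω : Ω | D ω = 1 ∧ Z ω = 0} : Set Ω) =ᵐ[μ] ((A ∩ B : Set Ω)) := by
    rw [Filter.eventuallyEq_set]
    filter_upwards [hmono] with ω hω
    constructor
    · rintro ⟨hD1', hZ0⟩
      have hDeq : D ω = D0 ω := by rw [hD, hZ0]; ring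
      have hd0 : D0 ω = 1 := by rw [← hDeq]; exact hD1'
      have hd1 : D1 ω = 1 := by
        rcases hD1bin ω with h | h
        · exfalso; rw [hd0, h] at hω; linarith
        · exact h
      exact ⟨⟨hd0, hd1⟩, hZ0⟩
    · rintro ⟨⟨hd0, hd1⟩, hZ0⟩
      refine ⟨?_, hZ0⟩
      rw [hD, hZ0, hd0]; ring
  -- independence of the events / integrals
  have hApre : A = (fun ω => (X ω, D0 ω, D1 ω)) ⁻¹' {p : ℝ × ℝ × ℝ | p.2.1 = 1 ∧ p.2.2 = 1} := rfl
  have hBpre : B = Z ⁻¹' {0} := rfl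
  have hSmeas : MeasurableSet {p : ℝ × ℝ × ℝ | p.2.1 = 1 ∧ p.2.2 = 1} :=
    ((measurable_fst.comp measurable_snd) (measurableSet_singleton 1)).inter
      ((measurable_snd.comp measurable_snd) (measurableSet_singleton 1))
  have hmeasAB : μ (A ∩ B) = μ A * μ B := by
    rw [hApre, hBpre]
    exact (indepFun_iff_measure_inter_preimage_eq_mul.mp hindep) _ _ hSmeas
      (measurableSet_singleton 0)
  -- factorize the integral over A ∩ B
  have hcompg : (fun p : ℝ × ℝ × ℝ => if p.2.1 = 1 ∧ p.2.2 = 1 then p.1 else 0) ∘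
      (fun ω => (X ω, D0 ω, D1 ω)) = A.indicator X := by
    funext ω
    by_cases h : ω ∈ A
    · simp [Set.indicator_of_mem h, Function.comp, hAdef.symm ▸ h, h.1, h.2]
    · have h' : ¬ (D0 ω = 1 ∧ D1 ω = 1) := h
      simp [Set.indicator_of_notMem h, Function.comp, h']
  have hcomph : (fun z : ℝ => if z = 0 then (1 : ℝ) else 0) ∘ Z = B.indicator 1 := by
    funext ω
    by_cases h : ω ∈ B
    · have h' : Z ω = 0 := h
      simp [Set.indicator_of_mem h, Function.comp, h']
    · have h' : ¬ Z ω = 0 := h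
      simp [Set.indicator_of_notMem h, Function.comp, h']
  have hgm : Measurable (fun p : ℝ × ℝ × ℝ => if p.2.1 = 1 ∧ p.2.2 = 1 then p.1 else 0) :=
    Measurable.ite hSmeas measurable_fst measurable_const
  have hhm : Measurable (fun z : ℝ => if z = 0 then (1 : ℝ) else 0) :=
    Measurable.ite (measurableSet_singleton 0) measurable_const measurable_const
  have hifun : IndepFun (A.indicator X) (B.indicator (1 : Ω → ℝ)) μ := by
    have h0 := hindep.comp hgm hhm
    rwa [hcompg, hcomph] at h0
  have hint1 : Integrable (A.indicator X) μ := hXint.indicator hAmeas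
  have hint2 : Integrable (B.indicator (1 : Ω → ℝ)) μ := (integrable_const 1).indicator hBmeas
  have hprod : (A ∩ B).indicator X = A.indicator X * B.indicator (1 : Ω → ℝ) := by
    funext ω
    by_cases hA' : ω ∈ A <;> by_cases hB' : ω ∈ B <;>
      simp [Set.indicator, hA', hB']
  have hkey : ∫ ω in A ∩ B, X ω ∂μ = (∫ ω in A, X ω ∂μ) * (μ B).toReal := by
    rw [← integral_indicator (hAmeas.inter hBmeas), hprod,
      IndepFun.integral_mul_eq_mul_integral hifun hint1.aestronglyMeasurable
        hint2.aestronglyMeasurable, integral_indicator hAmeas,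
      integral_indicator hBmeas]
    simp [Measure.restrict_apply_univ, Measure.real]
  -- rewrite conditional measures
  have hcond1 : μ[|{ω | D ω = 1 ∧ Z ω = 0}] = μ[|A ∩ B] := by
    unfold ProbabilityTheory.cond
    rw [measure_congr hSeq, Measure.restrict_congr_set hSeq]
  rw [hcond1]
  unfold ProbabilityTheory.cond
  rw [integral_smul_measure, integral_smul_measure]
  simp only [hmeasAB, hkey]
  have hAfin : μ A ≠ ⊤ := measure_ne_top μ A
  have hBfin : μ B ≠ ⊤ := measure_ne_top μ B
  have hAne : (μ A).toReal ≠ 0 := by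
    exact (ENNReal.toReal_pos hATpos.ne' hAfin).ne'
  have hBne : (μ B).toReal ≠ 0 := by
    exact (ENNReal.toReal_pos hZ0pos.ne' hBfin).ne'
  rw [ENNReal.toReal_inv, ENNReal.toReal_inv, ENNReal.toReal_mul]
  simp only [smul_eq_mul]
  field_simp
end

section
/- If (X, D(0), D(1)) is independent of Z, P(Z=1) > 0, and monotonicity holds (D(1) ≥ D(0) a.s.), then E[X | D = 0, Z = 1] = E[X | D(0) = D(1) = 0], provided P(D(0)=D(1)=0) > 0 and X is integrable. -/
open MeasureTheory ProbabilityTheory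

/-- If (X, D(0), D(1)) is independent of Z, P(Z=1) > 0, and monotonicity holds (D(1) ≥ D(0) a.s.),
then E[X | D = 0, Z = 1] = E[X | D(0) = D(1) = 0], provided P(D(0)=D(1)=0) > 0 and X is
integrable. -/
theorem profiling_observable_never_takers
    {Ω : Type*} [MeasurableSpace Ω] (μ : Measure Ω) [IsProbabilityMeasure μ]
    (Z D0 D1 X : Ω → ℝ)
    (hZ : Measurable Z) (hD0 : Measurable D0) (hD1 : Measurable D1) (hX : Measurable X)
    (hZbin : ∀ ω, Z ω = 0 ∨ Z ω = 1)
    (hD0bin : ∀ ω, D0 ω = 0 ∨ D0 ω = 1) (hD1bin : ∀ ω, D1 ω = 0 ∨ D1 ω = 1)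
    (hindep : IndepFun (fun ω => (X ω, D0 ω, D1 ω)) Z μ)
    (hZ1pos : 0 < μ {ω | Z ω = 1})
    (hmono : ∀ᵐ ω ∂μ, D0 ω ≤ D1 ω)
    (hNTpos : 0 < μ {ω | D0 ω = 0 ∧ D1 ω = 0})
    (hXint : Integrable X μ)
    (D : Ω → ℝ) (hD : ∀ ω, D ω = Z ω * D1 ω + (1 - Z ω) * D0 ω) :
    ∫ ω, X ω ∂(μ[|{ω | D ω = 0 ∧ Z ω = 1}]) =
      ∫ ω, X ω ∂(μ[|{ω | D0 ω = 0 ∧ D1 ω = 0}]) := by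
  set A : Set Ω := {ω | D0 ω = 0 ∧ D1 ω = 0} with hAdef
  set B : Set Ω := {ω | Z ω = 1} with hBdef
  have hAmeas : MeasurableSet A := by
    have : A = D0 ⁻¹' {0} ∩ D1 ⁻¹' {0} := by ext ω; simp [hAdef, Set.mem_setOf_eq]
    rw [this]
    exact (hD0 (measurableSet_singleton 0)).inter (hD1 (measurableSet_singleton 0))
  have hBmeas : MeasurableSet B := hZ (measurableSet_singleton 1)
  -- a.e. set equality
  have hset : {ω | D ω = 0 ∧ Z ω = 1} =ᵐ[μ] ((A ∩ B : Set Ω)) := by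
    rw [Filter.eventuallyEq_set]
    filter_upwards [hmono] with ω hω
    simp only [Set.mem_setOf_eq, Set.mem_inter_iff, hAdef, hBdef]
    constructor
    · rintro ⟨hD0eq, hZ1⟩
      rw [hD ω, hZ1] at hD0eq
      simp at hD0eq
      have hD0z : D0 ω = 0 := by
        rcases hD0bin ω with h | h
        · exact h
        · rw [h, hD0eq] at hω; linarith
      exact ⟨⟨hD0z, hD0eq⟩, hZ1⟩
    · rintro ⟨⟨h0, h1⟩, hZ1⟩
      refine ⟨?_, hZ1⟩
      rw [hD ω, hZ1, h1]; ring
  have hcondeq : μ[|{ω | D ω = 0 ∧ Z ω = 1}] = μ[|A ∩ B] := by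
    unfold ProbabilityTheory.cond
    rw [measure_congr hset, Measure.restrict_congr_set hset]
  rw [hcondeq]
  -- independence facts
  have hmul : μ (A ∩ B) = μ A * μ B := by
    have := hindep.measure_inter_preimage_eq_mul
      {p : ℝ × ℝ × ℝ | p.2.1 = 0 ∧ p.2.2 = 0} {(1 : ℝ)}
      (by
        have h1 : MeasurableSet {p : ℝ × ℝ × ℝ | p.2.1 = 0} :=
          (measurable_fst.comp measurable_snd) (measurableSet_singleton 0)
        have h2 : MeasurableSet {p : ℝ × ℝ × ℝ | p.2.2 = 0} :=
          (measurable_snd.comp measurable_snd) (measurableSet_singleton 0)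
        have : {p : ℝ × ℝ × ℝ | p.2.1 = 0 ∧ p.2.2 = 0}
            = {p : ℝ × ℝ × ℝ | p.2.1 = 0} ∩ {p | p.2.2 = 0} := rfl
        rw [this]; exact h1.inter h2)
      (measurableSet_singleton 1)
    simpa [hAdef, hBdef, Set.preimage, Set.mem_setOf_eq] using this
  -- set integral independence
  have hg : Measurable fun p : ℝ × ℝ × ℝ =>
      Set.indicator {p : ℝ × ℝ × ℝ | p.2.1 = 0 ∧ p.2.2 = 0} (fun q => q.1) p := by
    apply Measurable.indicator measurable_fst
    have h1 : MeasurableSet {p : ℝ × ℝ × ℝ | p.2.1 = 0} :=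
      (measurable_fst.comp measurable_snd) (measurableSet_singleton 0)
    have h2 : MeasurableSet {p : ℝ × ℝ × ℝ | p.2.2 = 0} :=
      (measurable_snd.comp measurable_snd) (measurableSet_singleton 0)
    exact h1.inter h2
  have hk : Measurable fun z : ℝ => Set.indicator {(1:ℝ)} (fun _ => (1:ℝ)) z :=
    measurable_const.indicator (measurableSet_singleton 1)
  have hindep2 : IndepFun (A.indicator X) (B.indicator (fun _ => (1:ℝ))) μ := by
    have h := hindep.comp hg hk
    have e1 : A.indicator X = (fun p : ℝ × ℝ × ℝ =>
        Set.indicator {p : ℝ × ℝ × ℝ | p.2.1 = 0 ∧ p.2.2 = 0} (fun q => q.1) p) ∘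
        (fun ω => (X ω, D0 ω, D1 ω)) := by
      funext ω
      simp [Set.indicator_apply, hAdef, Set.mem_setOf_eq, Function.comp]
    have e2 : B.indicator (fun _ => (1:ℝ)) = (fun z : ℝ =>
        Set.indicator {(1:ℝ)} (fun _ => (1:ℝ)) z) ∘ Z := by
      funext ω
      simp [Set.indicator_apply, hBdef, Set.mem_setOf_eq, Function.comp]
    rw [e1, e2]
    exact h
  have hint1 : Integrable (A.indicator X) μ := hXint.indicator hAmeas
  have hint2 : Integrable (B.indicator (fun _ => (1:ℝ))) μ :=
    (integrable_const 1).indicator hBmeas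
  have hprodint : ∫ ω, A.indicator X ω * B.indicator (fun _ => (1:ℝ)) ω ∂μ
      = (∫ ω, A.indicator X ω ∂μ) * ∫ ω, B.indicator (fun _ => (1:ℝ)) ω ∂μ :=
    hindep2.integral_fun_mul_eq_mul_integral hint1.aestronglyMeasurable hint2.aestronglyMeasurable
  have hprodfun : ∀ ω, A.indicator X ω * B.indicator (fun _ => (1:ℝ)) ω
      = (A ∩ B).indicator X ω := by
    intro ω
    by_cases h1 : ω ∈ A <;> by_cases h2 : ω ∈ B <;>
      simp [Set.indicator, h1, h2, Set.mem_inter_iff]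
  have hsetint : ∫ ω in A ∩ B, X ω ∂μ = (μ B).toReal * ∫ ω in A, X ω ∂μ := by
    have e1 : ∫ ω in A ∩ B, X ω ∂μ = ∫ ω, (A ∩ B).indicator X ω ∂μ :=
      (integral_indicator (hAmeas.inter hBmeas)).symm
    have e2 : ∫ ω, A.indicator X ω ∂μ = ∫ ω in A, X ω ∂μ :=
      integral_indicator hAmeas
    have e3 : ∫ ω, B.indicator (fun _ => (1:ℝ)) ω ∂μ = (μ B).toReal := by
      rw [integral_indicator hBmeas]; simp; rfl
    rw [e1, ← funext hprodfun, hprodint, e2, e3]; ring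
  -- finish
  have hBne : μ B ≠ 0 := ne_of_gt hZ1pos
  have hAne : μ A ≠ 0 := ne_of_gt hNTpos
  have hBfin : μ B ≠ ⊤ := measure_ne_top μ B
  have hAfin : μ A ≠ ⊤ := measure_ne_top μ A
  unfold ProbabilityTheory.cond
  rw [integral_smul_measure, integral_smul_measure, hmul, hsetint]
  rw [ENNReal.mul_inv (Or.inl hAne) (Or.inl hAfin),
    ENNReal.toReal_mul, ENNReal.toReal_inv, ENNReal.toReal_inv]
  have hBtoReal : (μ B).toReal ≠ 0 := by
    simp [ENNReal.toReal_ne_zero, hBne, hBfin]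
  simp only [smul_eq_mul]
  field_simp
end

section
/- Under independence of Z from (X, D(0), D(1)), monotonicity, 0 < P(Z=1) < 1, and P(D(1) > D(0)) > 0, the complier covariate mean satisfies: E[X | D(0) < D(1)] = (E[X] − E[X | D=0, Z=1]·P(D=0 | Z=1) − E[X | D=1, Z=0]·P(D=1 | Z=0)) / (E[D | Z=1] − E[D | Z=0]). -/
open MeasureTheory ProbabilityTheory

section Aux

variable {Ω α β : Type*} [MeasurableSpace Ω] [MeasurableSpace α] [MeasurableSpace β]

lemma integral_cond_eq (μ : Measure Ω) (s : Set Ω) (f : Ω → ℝ) :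
    ∫ ω, f ω ∂(μ[|s]) = (μ s).toReal⁻¹ * ∫ ω in s, f ω ∂μ := by
  rw [ProbabilityTheory.cond, integral_smul_measure, ENNReal.toReal_inv, smul_eq_mul]

lemma integral_mul_indicator_of_indep
    {μ : Measure Ω} [IsProbabilityMeasure μ] {F : Ω → α} {G : Ω → β}
    (hindep : IndepFun F G μ) (hG : Measurable G)
    {φ : α → ℝ} (hφ : Measurable φ)
    (hint : Integrable (fun ω => φ (F ω)) μ) {u : Set β} (hu : MeasurableSet u) :
    ∫ ω, (φ (F ω) * (G ⁻¹' u).indicator 1 ω) ∂μ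
      = (∫ ω, φ (F ω) ∂μ) * (μ (G ⁻¹' u)).toReal := by
  have hgind : (fun ω => (G ⁻¹' u).indicator (1 : Ω → ℝ) ω)
      = fun ω => (u.indicator (1 : β → ℝ)) (G ω) := by
    funext ω; by_cases h : G ω ∈ u <;> simp [Set.indicator_apply, h]
  have hig : IndepFun (fun ω => φ (F ω)) (fun ω => u.indicator (1 : β → ℝ) (G ω)) μ :=
    hindep.comp hφ (measurable_one.indicator hu)
  have hgint : Integrable (fun ω => u.indicator (1 : β → ℝ) (G ω)) μ := by
    rw [← hgind]
    exact (integrable_const (1:ℝ)).indicator (hG hu)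
  have hmul := hig.integral_fun_mul_eq_mul_integral hint.aestronglyMeasurable hgint.aestronglyMeasurable
  calc ∫ ω, (φ (F ω) * (G ⁻¹' u).indicator 1 ω) ∂μ
      = (∫ ω, φ (F ω) ∂μ) * ∫ ω, u.indicator (1 : β → ℝ) (G ω) ∂μ := by
        rw [show (fun ω => φ (F ω) * (G ⁻¹' u).indicator 1 ω)
            = fun ω => φ (F ω) * u.indicator (1 : β → ℝ) (G ω) by
          funext ω; rw [congrFun hgind ω]]
        exact hmul
    _ = (∫ ω, φ (F ω) ∂μ) * (μ (G ⁻¹' u)).toReal := by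
        rw [← hgind, integral_indicator_one (hG hu), measureReal_def]

end Aux

/-- Under independence of Z from (X, D(0), D(1)), monotonicity, 0 < P(Z=1) < 1, and
P(D(1) > D(0)) > 0, the complier covariate mean satisfies
E[X | D(0) < D(1)] = (E[X] − E[X | D=0, Z=1]·P(D=0 | Z=1) − E[X | D=1, Z=0]·P(D=1 | Z=0))
/ (E[D | Z=1] − E[D | Z=0]). -/
theorem complier_mean_identification
    {Ω : Type*} [MeasurableSpace Ω] (μ : Measure Ω) [IsProbabilityMeasure μ]
    (Z D0 D1 X : Ω → ℝ)
    (hZ : Measurable Z) (hD0 : Measurable D0) (hD1 : Measurable D1) (hX : Measurable X)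
    (hZbin : ∀ ω, Z ω = 0 ∨ Z ω = 1)
    (hD0bin : ∀ ω, D0 ω = 0 ∨ D0 ω = 1) (hD1bin : ∀ ω, D1 ω = 0 ∨ D1 ω = 1)
    (hindep : IndepFun (fun ω => (X ω, D0 ω, D1 ω)) Z μ)
    (hZ1pos : 0 < μ {ω | Z ω = 1}) (hZ1lt : μ {ω | Z ω = 1} < 1)
    (hmono : ∀ᵐ ω ∂μ, D0 ω ≤ D1 ω)
    (hCOpos : 0 < μ {ω | D0 ω < D1 ω})
    (hXint : Integrable X μ)
    (D : Ω → ℝ) (hD : ∀ ω, D ω = Z ω * D1 ω + (1 - Z ω) * D0 ω)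
    (hATpos : 0 < μ {ω | D ω = 1 ∧ Z ω = 0})
    (hNTpos : 0 < μ {ω | D ω = 0 ∧ Z ω = 1}) :
    ∫ ω, X ω ∂(μ[|{ω | D0 ω < D1 ω}]) =
      ((∫ ω, X ω ∂μ)
        - (∫ ω, X ω ∂(μ[|{ω | D ω = 0 ∧ Z ω = 1}]))
            * ((μ[|{ω | Z ω = 1}]) {ω | D ω = 0}).toReal
        - (∫ ω, X ω ∂(μ[|{ω | D ω = 1 ∧ Z ω = 0}]))
            * ((μ[|{ω | Z ω = 0}]) {ω | D ω = 1}).toReal)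
      / ((∫ ω, D ω ∂(μ[|{ω | Z ω = 1}])) - ∫ ω, D ω ∂(μ[|{ω | Z ω = 0}])) := by
  classical
  have h1 : ∀ ω, Z ω = 1 → D ω = D1 ω := fun ω h => by rw [hD ω, h]; ring
  have h0 : ∀ ω, Z ω = 0 → D ω = D0 ω := fun ω h => by rw [hD ω, h]; ring
  have hDmeas : Measurable D := by
    have hDe : D = fun ω => Z ω * D1 ω + (1 - Z ω) * D0 ω := funext hD
    rw [hDe]
    exact (hZ.mul hD1).add ((measurable_const.sub hZ).mul hD0)
  -- measurable sets
  have hs1 : MeasurableSet {ω | Z ω = 1} := hZ (measurableSet_singleton 1)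
  have hs0 : MeasurableSet {ω | Z ω = 0} := hZ (measurableSet_singleton 0)
  have hCset : MeasurableSet {ω | D0 ω < D1 ω} := measurableSet_lt hD0 hD1
  have hNTset : MeasurableSet {ω | D1 ω = 0} := hD1 (measurableSet_singleton 0)
  have hATset : MeasurableSet {ω | D0 ω = 1} := hD0 (measurableSet_singleton 1)
  have hAset : MeasurableSet {ω | D ω = 0 ∧ Z ω = 1} :=
    (hDmeas (measurableSet_singleton 0)).inter hs1
  have hBset : MeasurableSet {ω | D ω = 1 ∧ Z ω = 0} :=
    (hDmeas (measurableSet_singleton 1)).inter hs0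
  -- nonvanishing measures
  have hμs1 : μ {ω | Z ω = 1} ≠ 0 := hZ1pos.ne'
  have hs0c : {ω | Z ω = 0} = {ω | Z ω = 1}ᶜ := by
    ext ω; rcases hZbin ω with h | h <;> simp [h]
  have hμs0 : μ {ω | Z ω = 0} ≠ 0 := by
    rw [hs0c, measure_compl hs1 (measure_ne_top μ _), measure_univ]
    intro h
    rw [tsub_eq_zero_iff_le] at h
    exact absurd hZ1lt (not_lt.mpr h)
  have ha1 : (μ {ω | Z ω = 1}).toReal ≠ 0 :=
    ENNReal.toReal_ne_zero.mpr ⟨hμs1, measure_ne_top μ _⟩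
  have ha0 : (μ {ω | Z ω = 0}).toReal ≠ 0 :=
    ENNReal.toReal_ne_zero.mpr ⟨hμs0, measure_ne_top μ _⟩
  have hcA : (μ {ω | D ω = 0 ∧ Z ω = 1}).toReal ≠ 0 :=
    ENNReal.toReal_ne_zero.mpr ⟨hNTpos.ne', measure_ne_top μ _⟩
  have hcB : (μ {ω | D ω = 1 ∧ Z ω = 0}).toReal ≠ 0 :=
    ENNReal.toReal_ne_zero.mpr ⟨hATpos.ne', measure_ne_top μ _⟩
  have hcC : (μ {ω | D0 ω < D1 ω}).toReal ≠ 0 :=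
    ENNReal.toReal_ne_zero.mpr ⟨hCOpos.ne', measure_ne_top μ _⟩
  -- integrability
  have hD1int : Integrable D1 μ := by
    refine (integrable_const (1:ℝ)).mono' hD1.aestronglyMeasurable ?_
    filter_upwards with ω
    rcases hD1bin ω with h | h <;> simp [h]
  have hD0int : Integrable D0 μ := by
    refine (integrable_const (1:ℝ)).mono' hD0.aestronglyMeasurable ?_
    filter_upwards with ω
    rcases hD0bin ω with h | h <;> simp [h]
  -- the four independence computations
  have hANT : ∫ ω in {ω | D ω = 0 ∧ Z ω = 1}, X ω ∂μ
      = (∫ ω in {ω | D1 ω = 0}, X ω ∂μ) * (μ {ω | Z ω = 1}).toReal := by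
    have hφ : Measurable (fun p : ℝ × ℝ × ℝ => if p.2.2 = 0 then p.1 else 0) :=
      Measurable.ite (measurableSet_eq_fun (measurable_snd.comp measurable_snd) measurable_const)
        measurable_fst measurable_const
    have hcomp : (fun ω => if D1 ω = 0 then X ω else 0) = {ω | D1 ω = 0}.indicator X := by
      funext ω; by_cases h : D1 ω = 0 <;> simp [Set.indicator_apply, h]
    have hint : Integrable (fun ω => if D1 ω = 0 then X ω else 0) μ := by
      rw [hcomp]; exact hXint.indicator hNTset
    have key := integral_mul_indicator_of_indep hindep hZ hφ hint (measurableSet_singleton (1:ℝ))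
    rw [← integral_indicator hAset]
    have heq : {ω | D ω = 0 ∧ Z ω = 1}.indicator X
        = fun ω => (if D1 ω = 0 then X ω else 0) * (Z ⁻¹' {1}).indicator 1 ω := by
      funext ω
      rcases hZbin ω with h | h
      · have hne : ¬ (Z ω = 1) := by rw [h]; norm_num
        simp [Set.indicator_apply, Set.mem_preimage, hne]
      · simp [Set.indicator_apply, Set.mem_preimage, h, h1 ω h]
    rw [heq]
    refine Eq.trans key ?_
    show (∫ ω, (if D1 ω = 0 then X ω else 0) ∂μ) * (μ (Z ⁻¹' ({1} : Set ℝ))).toReal = _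
    rw [hcomp, integral_indicator hNTset]; rfl
  have hBAT : ∫ ω in {ω | D ω = 1 ∧ Z ω = 0}, X ω ∂μ
      = (∫ ω in {ω | D0 ω = 1}, X ω ∂μ) * (μ {ω | Z ω = 0}).toReal := by
    have hφ : Measurable (fun p : ℝ × ℝ × ℝ => if p.2.1 = 1 then p.1 else 0) :=
      Measurable.ite (measurableSet_eq_fun (measurable_fst.comp measurable_snd) measurable_const)
        measurable_fst measurable_const
    have hcomp : (fun ω => if D0 ω = 1 then X ω else 0) = {ω | D0 ω = 1}.indicator X := by
      funext ω; by_cases h : D0 ω = 1 <;> simp [Set.indicator_apply, h]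
    have hint : Integrable (fun ω => if D0 ω = 1 then X ω else 0) μ := by
      rw [hcomp]; exact hXint.indicator hATset
    have key := integral_mul_indicator_of_indep hindep hZ hφ hint (measurableSet_singleton (0:ℝ))
    rw [← integral_indicator hBset]
    have heq : {ω | D ω = 1 ∧ Z ω = 0}.indicator X
        = fun ω => (if D0 ω = 1 then X ω else 0) * (Z ⁻¹' {0}).indicator 1 ω := by
      funext ω
      rcases hZbin ω with h | h
      · simp [Set.indicator_apply, Set.mem_preimage, h, h0 ω h]
      · have hne : ¬ (Z ω = 0) := by rw [h]; norm_num
        simp [Set.indicator_apply, Set.mem_preimage, hne]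
    rw [heq]
    refine Eq.trans key ?_
    show (∫ ω, (if D0 ω = 1 then X ω else 0) ∂μ) * (μ (Z ⁻¹' ({0} : Set ℝ))).toReal = _
    rw [hcomp, integral_indicator hATset]; rfl
  have hE1 : ∫ ω in {ω | Z ω = 1}, D ω ∂μ
      = (∫ ω, D1 ω ∂μ) * (μ {ω | Z ω = 1}).toReal := by
    have hφ : Measurable (fun p : ℝ × ℝ × ℝ => p.2.2) := measurable_snd.comp measurable_snd
    have hint : Integrable (fun ω => D1 ω) μ := hD1int
    have key := integral_mul_indicator_of_indep hindep hZ hφ hint (measurableSet_singleton (1:ℝ))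
    rw [← integral_indicator hs1]
    have heq : {ω | Z ω = 1}.indicator D
        = fun ω => D1 ω * (Z ⁻¹' {1}).indicator 1 ω := by
      funext ω
      rcases hZbin ω with h | h
      · have hne : ¬ (Z ω = 1) := by rw [h]; norm_num
        simp [Set.indicator_apply, Set.mem_preimage, hne]
      · simp [Set.indicator_apply, Set.mem_preimage, h, h1 ω h]
    rw [heq]
    exact Eq.trans key rfl
  have hE0 : ∫ ω in {ω | Z ω = 0}, D ω ∂μ
      = (∫ ω, D0 ω ∂μ) * (μ {ω | Z ω = 0}).toReal := by
    have hφ : Measurable (fun p : ℝ × ℝ × ℝ => p.2.1) := measurable_fst.comp measurable_snd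
    have hint : Integrable (fun ω => D0 ω) μ := hD0int
    have key := integral_mul_indicator_of_indep hindep hZ hφ hint (measurableSet_singleton (0:ℝ))
    rw [← integral_indicator hs0]
    have heq : {ω | Z ω = 0}.indicator D
        = fun ω => D0 ω * (Z ⁻¹' {0}).indicator 1 ω := by
      funext ω
      rcases hZbin ω with h | h
      · simp [Set.indicator_apply, Set.mem_preimage, h, h0 ω h]
      · have hne : ¬ (Z ω = 0) := by rw [h]; norm_num
        simp [Set.indicator_apply, Set.mem_preimage, hne]
    rw [heq]
    exact Eq.trans key rfl
  -- the denominator is the complier probability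
  have hdenom : (∫ ω, D1 ω ∂μ) - (∫ ω, D0 ω ∂μ) = (μ {ω | D0 ω < D1 ω}).toReal := by
    rw [← integral_sub hD1int hD0int, ← measureReal_def, ← integral_indicator_one hCset]
    refine integral_congr_ae ?_
    filter_upwards [hmono] with ω hω
    rcases hD0bin ω with h0' | h0' <;> rcases hD1bin ω with h1' | h1'
    · simp [Set.indicator_apply, h0', h1']
    · simp [Set.indicator_apply, h0', h1']
    · rw [h0', h1'] at hω; norm_num at hω
    · simp [Set.indicator_apply, h0', h1']
  -- the numerator is the complier set integral
  have hnum : (∫ ω, X ω ∂μ) - (∫ ω in {ω | D1 ω = 0}, X ω ∂μ)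
        - (∫ ω in {ω | D0 ω = 1}, X ω ∂μ)
      = ∫ ω in {ω | D0 ω < D1 ω}, X ω ∂μ := by
    have hint2 : Integrable (fun a => X a - {ω | D1 ω = 0}.indicator X a) μ :=
      hXint.sub (hXint.indicator hNTset)
    rw [← integral_indicator hNTset, ← integral_indicator hATset, ← integral_indicator hCset,
      ← integral_sub hXint (hXint.indicator hNTset),
      ← integral_sub hint2 (hXint.indicator hATset)]
    refine integral_congr_ae ?_
    filter_upwards [hmono] with ω hω
    rcases hD0bin ω with h0' | h0' <;> rcases hD1bin ω with h1' | h1'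
    · simp [Set.indicator_apply, h0', h1']
    · simp [Set.indicator_apply, h0', h1']
    · rw [h0', h1'] at hω; norm_num at hω
    · simp [Set.indicator_apply, h0', h1']
  -- assembly
  have hAint' : {ω | Z ω = 1} ∩ {ω | D ω = 0} = {ω | D ω = 0 ∧ Z ω = 1} := by
    ext ω; exact ⟨fun h => ⟨h.2, h.1⟩, fun h => ⟨h.2, h.1⟩⟩
  have hBint' : {ω | Z ω = 0} ∩ {ω | D ω = 1} = {ω | D ω = 1 ∧ Z ω = 0} := by
    ext ω; exact ⟨fun h => ⟨h.2, h.1⟩, fun h => ⟨h.2, h.1⟩⟩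
  have cancel : ∀ (c a x : ℝ), c ≠ 0 → a ≠ 0 → c⁻¹ * (x * a) * (a⁻¹ * c) = x := by
    intro c a x hc ha; field_simp
  have cancel1 : ∀ (a x : ℝ), a ≠ 0 → a⁻¹ * (x * a) = x := by
    intro a x ha; field_simp
  simp only [integral_cond_eq]
  rw [cond_apply hs1 μ, cond_apply hs0 μ, hAint', hBint',
    ENNReal.toReal_mul, ENNReal.toReal_mul, ENNReal.toReal_inv, ENNReal.toReal_inv,
    hANT, hBAT, hE1, hE0,
    cancel _ _ _ hcA ha1, cancel _ _ _ hcB ha0, cancel1 _ _ ha1, cancel1 _ _ ha0,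
    hdenom, hnum, inv_mul_eq_div]
end

section
/- In the strata model, the population functional f(β) := (μ − μ_vnt/π_z − μ_vat/(1−π_z)) / (1 − π_vnt/π_z − π_vat/(1−π_z)) equals the complier mean μ_co = E[X | S = co], where μ = E[X], μ_vnt = E[Z(1−D)X], μ_vat = E[(1−Z)DX], π_vnt = E[Z(1−D)], π_vat = E[(1−Z)D]. -/
open MeasureTheory ProbabilityTheory

/-- Principal strata: never-takers, always-takers, compliers. -/
inductive Strata | nt | at' | co
  deriving DecidableEq

instance : MeasurableSpace Strata := ⊤

/-- In the strata model, the population functional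
f(β) := (μ − μ_vnt/π_z − μ_vat/(1−π_z)) / (1 − π_vnt/π_z − π_vat/(1−π_z))
equals the complier mean μ_co = E[X | S = co], where μ = E[X], μ_vnt = E[Z(1−D)X],
μ_vat = E[(1−Z)DX], π_vnt = E[Z(1−D)], π_vat = E[(1−Z)D]. -/
theorem population_functional_eq_complier_mean
    {Ω : Type*} [MeasurableSpace Ω] (μ : Measure Ω) [IsProbabilityMeasure μ]
    (Z X : Ω → ℝ) (S : Ω → Strata)
    (hZ : Measurable Z) (hS : Measurable S) (hX : Measurable X)
    (hZbin : ∀ ω, Z ω = 0 ∨ Z ω = 1)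
    (πz : ℝ) (hπz : (μ {ω | Z ω = 1}).toReal = πz) (hπz0 : 0 < πz) (hπz1 : πz < 1)
    (hindep : IndepFun Z (fun ω => (S ω, X ω)) μ)
    (hXint : Integrable X μ)
    (hco : 0 < (μ {ω | S ω = .co}).toReal)
    (D : Ω → ℝ)
    (hD : ∀ ω, D ω = match S ω with | .nt => 0 | .at' => 1 | .co => Z ω) :
    ((∫ ω, X ω ∂μ) - (∫ ω, Z ω * (1 - D ω) * X ω ∂μ) / πz
        - (∫ ω, (1 - Z ω) * D ω * X ω ∂μ) / (1 - πz))
      / (1 - (∫ ω, Z ω * (1 - D ω) ∂μ) / πz - (∫ ω, (1 - Z ω) * D ω ∂μ) / (1 - πz))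
      = ∫ ω, X ω ∂(μ[|{ω | S ω = .co}]) := by
  classical
  -- indicator functions of strata
  set Ind : Strata → Ω → ℝ := fun s ω => if S ω = s then 1 else 0 with hIndDef
  have hSet : ∀ s : Strata, MeasurableSet {ω | S ω = s} := fun s =>
    hS (show MeasurableSet ({s} : Set Strata) from trivial)
  have hIndmeas : ∀ s, Measurable (Ind s) := fun s =>
    Measurable.ite (hSet s) measurable_const measurable_const
  have hIndbd : ∀ s ω, ‖Ind s ω‖ ≤ 1 := by
    intro s ω; simp only [hIndDef]; split <;> simp
  -- integrability facts
  have hIndX_int : ∀ s, Integrable (fun ω => Ind s ω * X ω) μ := by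
    intro s
    refine hXint.norm.mono' ((hIndmeas s).mul hX).aestronglyMeasurable (ae_of_all _ fun ω => ?_)
    simp only [norm_mul]
    calc ‖Ind s ω‖ * ‖X ω‖ ≤ 1 * ‖X ω‖ :=
          mul_le_mul_of_nonneg_right (hIndbd s ω) (norm_nonneg _)
      _ = ‖X ω‖ := one_mul _
  have hInd_int : ∀ s, Integrable (Ind s) μ := by
    intro s
    exact (integrable_const (1:ℝ)).mono' (hIndmeas s).aestronglyMeasurable
      (ae_of_all _ fun ω => by simpa using hIndbd s ω)
  -- bounded W is integrable
  have hbd_int : ∀ (W : Ω → ℝ), Measurable W → (∀ ω, ‖W ω‖ ≤ 1) → Integrable W μ := by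
    intro W hW hWb
    exact (integrable_const (1:ℝ)).mono' hW.aestronglyMeasurable
      (ae_of_all _ fun ω => by simpa using hWb ω)
  -- key independence product formula
  have key : ∀ (W : Ω → ℝ) (f : Strata × ℝ → ℝ), Measurable W → (∀ ω, ‖W ω‖ ≤ 1) →
      Measurable f → Integrable (fun ω => f (S ω, X ω)) μ →
      IndepFun W (fun ω => (S ω, X ω)) μ →
      ∫ ω, W ω * f (S ω, X ω) ∂μ = (∫ ω, W ω ∂μ) * ∫ ω, f (S ω, X ω) ∂μ := by
    intro W f hW hWb hf hfi hind
    have h1 : IndepFun W (fun ω => f (S ω, X ω)) μ := hind.comp measurable_id hf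
    exact h1.integral_fun_mul_eq_mul_integral (hbd_int W hW hWb).aestronglyMeasurable hfi.aestronglyMeasurable
  have hZbd : ∀ ω, ‖Z ω‖ ≤ 1 := by
    intro ω; rcases hZbin ω with h | h <;> simp [h]
  have hZ'bd : ∀ ω, ‖1 - Z ω‖ ≤ 1 := by
    intro ω; rcases hZbin ω with h | h <;> simp [h]
  have hZ'meas : Measurable (fun ω => 1 - Z ω) := measurable_const.sub hZ
  have hZ'indep : IndepFun (fun ω => 1 - Z ω) (fun ω => (S ω, X ω)) μ :=
    hindep.comp (measurable_const.sub measurable_id) measurable_id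
  -- ∫ Z = πz
  have hintZ : ∫ ω, Z ω ∂μ = πz := by
    rw [← hπz]
    change _ = μ.real {ω | Z ω = 1}
    rw [← integral_indicator_one (show MeasurableSet {ω | Z ω = 1} from
        hZ (measurableSet_singleton (1:ℝ)))]
    congr 1; funext ω
    rcases hZbin ω with h | h <;>
      simp [Set.indicator_apply, Set.mem_setOf_eq, h]
  have hintZ' : ∫ ω, (1 - Z ω) ∂μ = 1 - πz := by
    rw [integral_sub (integrable_const 1) (hbd_int Z hZ hZbd), hintZ]
    simp
  -- pointwise rewriting of the integrands
  have hZD : ∀ ω, Z ω * (1 - D ω) = Z ω * Ind .nt ω := by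
    intro ω
    have hz : Z ω * (1 - Z ω) = 0 := by rcases hZbin ω with h | h <;> simp [h]
    rw [hD ω]; rcases hSw : S ω <;> simp [hIndDef, hSw, hz]
  have hZ'D : ∀ ω, (1 - Z ω) * D ω = (1 - Z ω) * Ind .at' ω := by
    intro ω
    have hz : (1 - Z ω) * Z ω = 0 := by rcases hZbin ω with h | h <;> simp [h]
    rw [hD ω]; rcases hSw : S ω <;> simp [hIndDef, hSw, hz]
  -- strata integrals
  have hf1 : ∀ s : Strata, Measurable (fun p : Strata × ℝ => (if p.1 = s then (1:ℝ) else 0) * p.2) :=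
    fun s => (Measurable.ite (measurable_fst (show MeasurableSet ({s} : Set Strata) from trivial)) measurable_const measurable_const).mul measurable_snd
  have hf2 : ∀ s : Strata, Measurable (fun p : Strata × ℝ => (if p.1 = s then (1:ℝ) else 0)) :=
    fun s => Measurable.ite (measurable_fst (show MeasurableSet ({s} : Set Strata) from trivial)) measurable_const measurable_const
  have eq1 : ∫ ω, Z ω * (1 - D ω) * X ω ∂μ = πz * ∫ ω, Ind .nt ω * X ω ∂μ := by
    have := key Z (fun p => (if p.1 = .nt then (1:ℝ) else 0) * p.2) hZ hZbd (hf1 .nt)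
      (hIndX_int .nt) hindep
    simp only [hIndDef] at this ⊢
    rw [← hintZ]
    rw [← this]
    congr 1; funext ω
    rw [mul_assoc (Z ω) _ (X ω)] at *
    rw [show Z ω * ((1 - D ω) * X ω) = Z ω * ((if S ω = .nt then (1:ℝ) else 0) * X ω) by
      have := hZD ω; simp only [hIndDef] at this
      rw [← mul_assoc, this, mul_assoc]]
  have eq2 : ∫ ω, (1 - Z ω) * D ω * X ω ∂μ = (1 - πz) * ∫ ω, Ind .at' ω * X ω ∂μ := by
    have := key (fun ω => 1 - Z ω) (fun p => (if p.1 = .at' then (1:ℝ) else 0) * p.2)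
      hZ'meas hZ'bd (hf1 .at') (hIndX_int .at') hZ'indep
    simp only [hIndDef] at this ⊢
    rw [← hintZ', ← this]
    congr 1; funext ω
    have h := hZ'D ω; simp only [hIndDef] at h
    rw [← mul_assoc, h, mul_assoc]
  have eq3 : ∫ ω, Z ω * (1 - D ω) ∂μ = πz * ∫ ω, Ind .nt ω ∂μ := by
    have := key Z (fun p => (if p.1 = .nt then (1:ℝ) else 0)) hZ hZbd (hf2 .nt)
      (hInd_int .nt) hindep
    simp only [hIndDef] at this ⊢
    rw [← hintZ, ← this]
    congr 1; funext ω
    have h := hZD ω; simp only [hIndDef] at h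
    exact h
  have eq4 : ∫ ω, (1 - Z ω) * D ω ∂μ = (1 - πz) * ∫ ω, Ind .at' ω ∂μ := by
    have := key (fun ω => 1 - Z ω) (fun p => (if p.1 = .at' then (1:ℝ) else 0))
      hZ'meas hZ'bd (hf2 .at') (hInd_int .at') hZ'indep
    simp only [hIndDef] at this ⊢
    rw [← hintZ', ← this]
    congr 1; funext ω
    have h := hZ'D ω; simp only [hIndDef] at h
    exact h
  -- probabilities of strata
  have hIndProb : ∀ s, ∫ ω, Ind s ω ∂μ = (μ {ω | S ω = s}).toReal := by
    intro s
    change _ = μ.real {ω | S ω = s}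
    rw [← integral_indicator_one (hSet s)]
    congr 1; funext ω
    simp [hIndDef, Set.indicator_apply, Set.mem_setOf_eq]
  -- partition: indicators sum to 1
  have hsum : ∀ ω, Ind .nt ω + Ind .at' ω + Ind .co ω = 1 := by
    intro ω; rcases hSw : S ω <;> simp [hIndDef, hSw]
  have hsumint : (∫ ω, Ind .nt ω ∂μ) + (∫ ω, Ind .at' ω ∂μ) + (∫ ω, Ind .co ω ∂μ) = 1 := by
    have h1 : ∫ ω, (Ind .nt ω + Ind .at' ω + Ind .co ω) ∂μ = 1 := by
      rw [show (fun ω => Ind .nt ω + Ind .at' ω + Ind .co ω) = fun _ => (1:ℝ) from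
        funext fun ω => hsum ω]
      simp
    rw [integral_add (show Integrable (fun ω => Ind .nt ω + Ind .at' ω) μ from
        (hInd_int .nt).add (hInd_int .at')) (hInd_int .co),
      integral_add (hInd_int .nt) (hInd_int .at')] at h1
    exact h1
  have hXsum : (∫ ω, Ind .nt ω * X ω ∂μ) + (∫ ω, Ind .at' ω * X ω ∂μ)
      + (∫ ω, Ind .co ω * X ω ∂μ) = ∫ ω, X ω ∂μ := by
    have h1 : ∫ ω, (Ind .nt ω * X ω + Ind .at' ω * X ω + Ind .co ω * X ω) ∂μ
        = ∫ ω, X ω ∂μ := by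
      congr 1; funext ω
      rw [← add_mul, ← add_mul, hsum, one_mul]
    rw [integral_add (show Integrable (fun ω => Ind .nt ω * X ω + Ind .at' ω * X ω) μ from
        (hIndX_int .nt).add (hIndX_int .at')) (hIndX_int .co),
      integral_add (hIndX_int .nt) (hIndX_int .at')] at h1
    exact h1
  -- the conditional expectation
  have hcoInd : ∫ ω, Ind .co ω * X ω ∂μ = ∫ ω in {ω | S ω = .co}, X ω ∂μ := by
    rw [← integral_indicator (hSet .co)]
    congr 1; funext ω
    simp [hIndDef, Set.indicator_apply, Set.mem_setOf_eq, ite_mul]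
  have hcond : ∫ ω, X ω ∂(μ[|{ω | S ω = .co}])
      = (μ {ω | S ω = .co}).toReal⁻¹ * ∫ ω in {ω | S ω = .co}, X ω ∂μ := by
    rw [ProbabilityTheory.cond, integral_smul_measure, ENNReal.toReal_inv, smul_eq_mul]
  -- put everything together
  rw [eq1, eq2, eq3, eq4, hcond, ← hcoInd]
  have hπz0' : πz ≠ 0 := ne_of_gt hπz0
  have hπz1' : (1:ℝ) - πz ≠ 0 := by linarith
  rw [mul_div_cancel_left₀ _ hπz0', mul_div_cancel_left₀ _ hπz1',
    mul_div_cancel_left₀ _ hπz0', mul_div_cancel_left₀ _ hπz1']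
  have hden : 1 - (∫ ω, Ind .nt ω ∂μ) - (∫ ω, Ind .at' ω ∂μ) = (μ {ω | S ω = .co}).toReal := by
    rw [← hIndProb .co]; linarith [hsumint]
  have hnum : (∫ ω, X ω ∂μ) - (∫ ω, Ind .nt ω * X ω ∂μ) - (∫ ω, Ind .at' ω * X ω ∂μ)
      = ∫ ω, Ind .co ω * X ω ∂μ := by linarith [hXsum]
  rw [hden, hnum, div_eq_inv_mul]
end
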